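/- Let p be a prime, H a free Z-module of rank p - 1 with an automorphism σ of order p having no nonzero fixed vector. Then any automorphism of H commuting with σ and of finite order is of the form ±σ^i for some i; i.e., the centralizer of ⟨σ⟩ in the finite automorphism group equals ⟨σ⟩ × {±1}. -/

import Mathlib

open Polynomial Module


lemma aux_totient_dvd {K : Type*} [Field K] [alg : Algebra ℚ K] [FiniteDimensional ℚ K]
    {p : ℕ} (hdim : Module.finrank ℚ K = p - 1)
    (x : K) (hx : IsOfFinOrder x) : Nat.totient (orderOf x) ∣ p - 1 := by
  haveI : CharZero K := charZero_of_injective_algebraMap (algebraMap ℚ K).injective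
  have hpos : 0 < orderOf x := hx.orderOf_pos
  have hprim : IsPrimitiveRoot x (orderOf x) := IsPrimitiveRoot.orderOf x
  have hmin : cyclotomic (orderOf x) ℚ = minpoly ℚ x := by
    rw [cyclotomic_eq_minpoly_rat hprim hpos]
    exact congrArg (fun a : Algebra ℚ K => @minpoly ℚ K _ _ a x) (Subsingleton.elim _ _)
  have hdeg := minpoly.degree_dvd (IsIntegral.of_finite ℚ x)
  rw [← hmin, natDegree_cyclotomic, hdim] at hdeg
  exact hdeg

lemma aux_cyclo {K : Type*} [Field K] [Algebra ℚ K] [FiniteDimensional ℚ K]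
    {p : ℕ} (hp : p.Prime) (hdim : Module.finrank ℚ K = p - 1)
    (ζ : K) (hζ : IsPrimitiveRoot ζ p) (c : K) (hc : IsOfFinOrder c) :
    ∃ i : ℕ, c = ζ ^ i ∨ c = -ζ ^ i := by
  have hp1 : 0 < p - 1 := by have := hp.two_le; omega
  set m := orderOf c with hm
  have hm0 : 0 < m := hc.orderOf_pos
  have hordζ : orderOf ζ = p := hζ.eq_orderOf.symm
  have htot : Nat.totient m ∣ p - 1 := aux_totient_dvd hdim c hc
  have hone : ∀ t : ℕ, 0 < t → (p - 1) * t ∣ p - 1 → t = 1 := by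
    intro t ht hdvd
    have := Nat.le_of_dvd hp1 hdvd
    nlinarith
  have hend : c ^ 2 = 1 → ∃ i : ℕ, c = ζ ^ i ∨ c = -ζ ^ i := by
    intro h
    have hfac : (c - 1) * (c + 1) = 0 := by linear_combination h
    refine ⟨0, ?_⟩
    rcases mul_eq_zero.mp hfac with h' | h'
    · exact Or.inl (by rw [pow_zero]; linear_combination h')
    · exact Or.inr (by rw [pow_zero]; linear_combination h')
  have hsmall : Nat.totient m = 1 → ∃ i : ℕ, c = ζ ^ i ∨ c = -ζ ^ i := by
    intro h1
    rcases Nat.totient_eq_one_iff.mp h1 with h | h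
    · refine ⟨0, Or.inl ?_⟩
      rw [pow_zero]
      exact orderOf_eq_one_iff.mp (by rw [← hm]; exact h)
    · apply hend
      have h2 := pow_orderOf_eq_one c
      rw [← hm, h] at h2
      exact h2
  by_cases hpm : p ∣ m
  · obtain ⟨s, hs⟩ := hpm
    have hps : ¬ p ∣ s := by
      intro hds
      have h2 : p ^ 2 ∣ m := by
        obtain ⟨u, hu⟩ := hds
        exact ⟨u, by rw [hs, hu]; ring⟩
      have h3 : Nat.totient (p ^ 2) ∣ Nat.totient m := Nat.totient_dvd_of_dvd h2
      rw [Nat.totient_prime_pow hp (by norm_num)] at h3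
      have hpdvd : p ∣ Nat.totient m := dvd_trans ⟨p - 1, by ring⟩ h3
      have h4 : p ∣ p - 1 := hpdvd.trans htot
      have := Nat.le_of_dvd hp1 h4
      omega
    have hcop : Nat.Coprime p s := (Nat.Prime.coprime_iff_not_dvd hp).mpr hps
    have hs0 : 0 < s := by
      rcases Nat.eq_zero_or_pos s with h | h
      · subst h; simp at hs; omega
      · exact h
    have hts : Nat.totient s = 1 := by
      apply hone _ (Nat.totient_pos.mpr hs0)
      have heq : Nat.totient m = (p - 1) * Nat.totient s := by
        rw [hs, Nat.totient_mul hcop, Nat.totient_prime hp]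
      rw [heq] at htot
      exact htot
    have hc2p : c ^ (2 * p) = 1 := by
      apply orderOf_dvd_iff_pow_eq_one.mp
      rw [← hm]
      rcases Nat.totient_eq_one_iff.mp hts with h | h <;> rw [hs, h]
      · exact ⟨2, by ring⟩
      · exact ⟨1, by ring⟩
    rcases hp.eq_two_or_odd' with hp2 | hpo
    · exact hsmall (Nat.dvd_one.mp (by rw [hp2] at htot; exact htot))
    · haveI : NeZero p := ⟨hp.pos.ne'⟩
      have hc2 : (c ^ 2) ^ p = 1 := by rw [← pow_mul]; exact hc2p
      obtain ⟨j, _, hj⟩ := hζ.eq_pow_of_pow_eq_one hc2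
      obtain ⟨t, ht⟩ := hpo
      refine ⟨j * ((p + 1) / 2), ?_⟩
      have h2half : (p + 1) / 2 * 2 = p + 1 := by omega
      have hhalf : 2 * (j * ((p + 1) / 2)) = (p + 1) * j := by
        rw [show 2 * (j * ((p + 1) / 2)) = (p + 1) / 2 * 2 * j by ring, h2half]
      have hp1pow : ζ ^ (p + 1) = ζ := by rw [pow_succ, hζ.pow_eq_one, one_mul]
      have hpow : ζ ^ (2 * (j * ((p + 1) / 2))) = c ^ 2 := by
        rw [hhalf, pow_mul, hp1pow, hj]
      have hfac : (c - ζ ^ (j * ((p + 1) / 2))) * (c + ζ ^ (j * ((p + 1) / 2))) = 0 := by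
        have hsq : (ζ ^ (j * ((p + 1) / 2))) ^ 2 = c ^ 2 := by
          rw [← pow_mul, mul_comm _ 2]; exact hpow
        linear_combination -hsq
      rcases mul_eq_zero.mp hfac with h' | h'
      · exact Or.inl (by linear_combination h')
      · exact Or.inr (by linear_combination h')
  · have hcop : Nat.Coprime p m := (Nat.Prime.coprime_iff_not_dvd hp).mpr hpm
    have hd : orderOf (ζ * c) = p * m := by
      rw [(Commute.all ζ c).orderOf_mul_eq_mul_orderOf_of_coprime
        (by rw [hordζ, ← hm]; exact hcop), hordζ]
    have hfin : IsOfFinOrder (ζ * c) := by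
      rw [← orderOf_pos_iff, hd]
      exact Nat.mul_pos hp.pos hm0
    have htot2 := aux_totient_dvd hdim (ζ * c) hfin
    rw [hd, Nat.totient_mul hcop, Nat.totient_prime hp] at htot2
    exact hsmall (hone _ (Nat.totient_pos.mpr hm0) htot2)


variable {p : ℕ}

set_option maxHeartbeats 1000000 in
theorem stmt_10 (p : ℕ) (hp : Nat.Prime p)
    (H : Type*) [AddCommGroup H] [Module ℤ H] [Module.Free ℤ H] [Module.Finite ℤ H]
    (hrank : Module.finrank ℤ H = p - 1)
    (σ : H ≃ₗ[ℤ] H) (hord : orderOf σ = p)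
    (hfix : ∀ v : H, σ v = v → v = 0)
    (τ : H ≃ₗ[ℤ] H) (hτ : IsOfFinOrder τ) (hcomm : Commute σ τ) :
    ∃ i : ℕ, (∀ v : H, τ v = (σ ^ i) v) ∨ (∀ v : H, τ v = -((σ ^ i) v)) := by
  classical
  haveI : Fact p.Prime := ⟨hp⟩
  have hp2 := hp.two_le
  set ι := Module.Free.ChooseBasisIndex ℤ H with hι
  let b : Basis ι ℤ H := Module.Free.chooseBasis ℤ H
  have hcard : Fintype.card ι = p - 1 := by
    rw [← Module.finrank_eq_card_chooseBasisIndex, hrank]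
  haveI : Nonempty ι := Fintype.card_pos_iff.mp (by omega)
  -- maps to matrices over ℚ
  let Φ : (H →ₗ[ℤ] H) →+* Matrix ι ι ℚ :=
    ((Int.castRingHom ℚ).mapMatrix).comp (↑(LinearMap.toMatrixAlgEquiv b) : (H →ₗ[ℤ] H) →+* Matrix ι ι ℤ)
  let h : H → (ι → ℚ) := fun v i => ((b.repr v) i : ℚ)
  have hinj : Function.Injective h := by
    intro v w hvw
    have : b.repr v = b.repr w := by
      ext i
      have h2 : ((b.repr v) i : ℚ) = ((b.repr w) i : ℚ) := congrFun hvw i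
      exact_mod_cast h2
    exact b.repr.injective this
  have hΦ : ∀ f : H →ₗ[ℤ] H, Φ f = ((LinearMap.toMatrix b b f).map (fun x : ℤ => (x : ℚ))) := by
    intro f
    rfl
  have hcompat : ∀ (f : H →ₗ[ℤ] H) (v : H), (Φ f).mulVec (h v) = h (f v) := by
    intro f v
    funext j
    have key := congrFun (LinearMap.toMatrix_mulVec_repr b b f v) j
    rw [hΦ]
    simp only [Matrix.mulVec, dotProduct, Matrix.map_apply, h] at *
    rw [← key]
    push_cast
    rfl
  -- the coercion monoid hom
  let Θ : (H ≃ₗ[ℤ] H) →* (H →ₗ[ℤ] H) := LinearEquiv.automorphismGroup.toLinearMapMonoidHom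
  have hΘ : ∀ (e : H ≃ₗ[ℤ] H) (v : H), (Θ e) v = e v := fun _ _ => rfl
  -- geometric sum vanishes
  have hS : (∑ i ∈ Finset.range p, ((σ : H →ₗ[ℤ] H) ^ i)) = 0 := by
    have hEp : ((σ : H →ₗ[ℤ] H)) ^ p = 1 := by
      have h1 : σ ^ p = 1 := by rw [← hord]; exact pow_orderOf_eq_one σ
      have h2 : Θ (σ ^ p) = Θ 1 := congrArg Θ h1
      rwa [map_pow, map_one] at h2
    have hg := mul_geom_sum ((σ : H →ₗ[ℤ] H)) p
    rw [hEp, sub_self] at hg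
    ext v
    have h3 := congrArg (fun f : H →ₗ[ℤ] H => f v) hg
    simp only [Module.End.mul_apply, LinearMap.sub_apply, Module.End.one_apply,
      LinearMap.zero_apply] at h3 ⊢
    have h4 : σ ((∑ i ∈ Finset.range p, ((σ : H →ₗ[ℤ] H) ^ i)) v)
        = (∑ i ∈ Finset.range p, ((σ : H →ₗ[ℤ] H) ^ i)) v := by
      have := sub_eq_zero.mp h3
      exact this
    exact hfix _ h4
  -- matrices
  set A : Matrix ι ι ℚ := Φ ↑σ with hA
  set B : Matrix ι ι ℚ := Φ ↑τ with hB
  have hAB : Commute A B := by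
    have h1 : (↑(σ * τ) : H →ₗ[ℤ] H) = (↑(τ * σ) : H →ₗ[ℤ] H) := congrArg _ hcomm
    rw [LinearEquiv.coe_toLinearMap_mul, LinearEquiv.coe_toLinearMap_mul] at h1
    have := congrArg Φ h1
    rw [map_mul, map_mul] at this
    exact this
  have hA1 : aeval A (cyclotomic p ℚ) = 0 := by
    rw [cyclotomic_prime ℚ p]
    rw [map_sum]
    simp only [map_pow, aeval_X]
    have : (∑ i ∈ Finset.range p, A ^ i) = Φ (∑ i ∈ Finset.range p, ((σ : H →ₗ[ℤ] H) ^ i)) := by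
      rw [map_sum]
      simp only [map_pow, hA]
    rw [this, hS, map_zero]
  -- the cyclotomic field
  haveI hirr : Fact (Irreducible (cyclotomic p ℚ)) := ⟨cyclotomic.irreducible_rat hp.pos⟩
  set K := AdjoinRoot (cyclotomic p ℚ) with hK
  haveI : CharZero K := charZero_of_injective_algebraMap (algebraMap ℚ K).injective
  haveI : FiniteDimensional ℚ K :=
    PowerBasis.finite (AdjoinRoot.powerBasis (cyclotomic_ne_zero p ℚ))
  have hdim : Module.finrank ℚ K = p - 1 := by
    rw [(AdjoinRoot.powerBasis (cyclotomic_ne_zero p ℚ)).finrank, AdjoinRoot.powerBasis_dim,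
      natDegree_cyclotomic, Nat.totient_prime hp]
  set ζ : K := AdjoinRoot.root (cyclotomic p ℚ) with hζdef
  have hζ : IsPrimitiveRoot ζ p := by
    haveI : NeZero ((p : K)) := ⟨Nat.cast_ne_zero.mpr hp.ne_zero⟩
    rw [← Polynomial.isRoot_cyclotomic_iff (R := K) (n := p)]
    have h1 : cyclotomic p K = (cyclotomic p ℚ).map (algebraMap ℚ K) := (map_cyclotomic _ _).symm
    rw [h1]
    exact AdjoinRoot.isRoot_root _
  have hvanish : ∀ g ∈ Ideal.span ({cyclotomic p ℚ} : Set ℚ[X]),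
      ((aeval A).toRingHom : ℚ[X] →+* Matrix ι ι ℚ) g = 0 := by
    intro g hg
    rw [Ideal.mem_span_singleton] at hg
    obtain ⟨c, rfl⟩ := hg
    show aeval A (cyclotomic p ℚ * c) = 0
    rw [map_mul, hA1, zero_mul]
  set ρ : K →+* Matrix ι ι ℚ :=
    Ideal.Quotient.lift (Ideal.span ({cyclotomic p ℚ} : Set ℚ[X]))
      ((aeval A).toRingHom : ℚ[X] →+* Matrix ι ι ℚ) hvanish with hρdef
  have hρmk : ∀ g : ℚ[X], ρ (AdjoinRoot.mk (cyclotomic p ℚ) g) = aeval A g := by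
    intro g
    exact Ideal.Quotient.lift_mk _ _ _
  have hρroot : ρ ζ = A := by
    have h1 : ζ = AdjoinRoot.mk (cyclotomic p ℚ) X := rfl
    rw [h1, hρmk, aeval_X]
  have hρsmul : ∀ (q : ℚ) (k : K), ρ (q • k) = q • ρ k := by
    intro q k
    induction k using AdjoinRoot.induction_on with
    | ih g => rw [AdjoinRoot.smul_mk, hρmk, hρmk, map_smul]
  -- the distinguished vector
  set v₀ : ι → ℚ := h (b (Classical.arbitrary ι)) with hv₀def
  have hv₀ : v₀ ≠ 0 := by
    have h1 : v₀ (Classical.arbitrary ι) = 1 := by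
      simp [hv₀def, h, Basis.repr_self]
    intro h0
    rw [h0] at h1
    simp at h1
  -- the evaluation map
  set Ψ : K →ₗ[ℚ] (ι → ℚ) :=
    { toFun := fun k => (ρ k).mulVec v₀
      map_add' := fun x y => by
        show (ρ (x + y)).mulVec v₀ = (ρ x).mulVec v₀ + (ρ y).mulVec v₀
        rw [map_add, Matrix.add_mulVec]
      map_smul' := fun q k => by
        show (ρ (q • k)).mulVec v₀ = (RingHom.id ℚ) q • (ρ k).mulVec v₀
        rw [hρsmul, Matrix.smul_mulVec]
        rfl } with hΨdef
  have hΨapp : ∀ k : K, Ψ k = (ρ k).mulVec v₀ := fun k => rfl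
  have hΨinj : Function.Injective Ψ := by
    rw [injective_iff_map_eq_zero]
    intro k hk
    by_contra hk0
    have h1 : (ρ k⁻¹).mulVec ((ρ k).mulVec v₀) = v₀ := by
      rw [Matrix.mulVec_mulVec, ← map_mul, inv_mul_cancel₀ hk0, map_one, Matrix.one_mulVec]
    rw [hΨapp] at hk
    rw [hk, Matrix.mulVec_zero] at h1
    exact hv₀ h1.symm
  have hfr : Module.finrank ℚ K = Module.finrank ℚ (ι → ℚ) := by
    rw [hdim, Module.finrank_pi, hcard]
  have hΨsurj : Function.Surjective Ψ :=
    (LinearMap.injective_iff_surjective_of_finrank_eq_finrank hfr).mp hΨinj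
  -- B commutes with the image of ρ
  have hcommB : ∀ k : K, ρ k * B = B * ρ k := by
    intro k
    induction k using AdjoinRoot.induction_on with
    | ih g =>
      rw [hρmk]
      have hcom : Commute (aeval A g) B := by
        induction g using Polynomial.induction_on with
        | C a =>
          rw [aeval_C]
          exact (Algebra.commutes a B : Commute _ B)
        | add f g hf hg =>
          rw [map_add]
          exact hf.add_left hg
        | monomial n a _ =>
          rw [map_mul, aeval_C, map_pow, aeval_X]
          have hca : Commute ((algebraMap ℚ (Matrix ι ι ℚ)) a) B := Algebra.commutes a B
          exact hca.mul_left (hAB.pow_left (n + 1))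
      exact hcom.eq
  obtain ⟨c, hc⟩ := hΨsurj (B.mulVec v₀)
  have hBmul : ∀ w : ι → ℚ, B.mulVec w = (ρ c).mulVec w := by
    intro w
    obtain ⟨k, rfl⟩ := hΨsurj w
    rw [hΨapp]
    calc B.mulVec ((ρ k).mulVec v₀) = (B * ρ k).mulVec v₀ := Matrix.mulVec_mulVec _ _ _
      _ = (ρ k * B).mulVec v₀ := by rw [hcommB k]
      _ = (ρ k).mulVec (B.mulVec v₀) := (Matrix.mulVec_mulVec _ _ _).symm
      _ = (ρ k).mulVec ((ρ c).mulVec v₀) := by rw [← hΨapp, hc]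
      _ = (ρ k * ρ c).mulVec v₀ := Matrix.mulVec_mulVec _ _ _
      _ = (ρ c * ρ k).mulVec v₀ := by rw [← map_mul, ← map_mul, mul_comm k c]
      _ = (ρ c).mulVec ((ρ k).mulVec v₀) := (Matrix.mulVec_mulVec _ _ _).symm
  have hpow : ∀ n : ℕ, (B ^ n).mulVec v₀ = (ρ (c ^ n)).mulVec v₀ := by
    intro n
    induction n with
    | zero => rw [pow_zero, pow_zero, map_one]
    | succ n ih =>
      rw [pow_succ', pow_succ']
      calc (B * B ^ n).mulVec v₀ = B.mulVec ((B ^ n).mulVec v₀) := (Matrix.mulVec_mulVec _ _ _).symm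
        _ = B.mulVec ((ρ (c ^ n)).mulVec v₀) := by rw [ih]
        _ = (ρ c).mulVec ((ρ (c ^ n)).mulVec v₀) := hBmul _
        _ = (ρ (c * c ^ n)).mulVec v₀ := by rw [Matrix.mulVec_mulVec, ← map_mul]
  have hcN : c ^ orderOf τ = 1 := by
    have hBN : B ^ orderOf τ = 1 := by
      have hτN : τ ^ orderOf τ = 1 := pow_orderOf_eq_one τ
      have h1 : Θ (τ ^ orderOf τ) = Θ 1 := congrArg Θ hτN
      rw [map_pow, map_one] at h1
      have h2 : Θ τ = (↑τ : H →ₗ[ℤ] H) := rfl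
      rw [h2] at h1
      rw [hB, ← map_pow, h1, map_one]
    apply hΨinj
    rw [hΨapp, hΨapp, map_one, Matrix.one_mulVec, ← hpow, hBN, Matrix.one_mulVec]
  have hcfin : IsOfFinOrder c :=
    isOfFinOrder_iff_pow_eq_one.mpr ⟨orderOf τ, hτ.orderOf_pos, hcN⟩
  obtain ⟨i, hcs⟩ := aux_cyclo hp hdim ζ hζ c hcfin
  -- transport back
  have hσi : ∀ v : H, h ((σ ^ i) v) = (A ^ i).mulVec (h v) := by
    intro v
    have h1 : ((σ ^ i : H ≃ₗ[ℤ] H) : H →ₗ[ℤ] H) = ((σ : H →ₗ[ℤ] H)) ^ i := map_pow Θ σ i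
    have h2 := hcompat (((σ : H →ₗ[ℤ] H)) ^ i) v
    rw [map_pow, ← hA] at h2
    have h3 : (σ ^ i) v = ((↑σ : H →ₗ[ℤ] H) ^ i) v := by rw [← h1]; rfl
    rw [h3, ← h2]
  have hτc : ∀ v : H, h (τ v) = (ρ c).mulVec (h v) := by
    intro v
    rw [← hBmul, hB, hcompat]
    rfl
  have hneg : ∀ x : H, h (-x) = - h x := by
    intro x
    funext j
    simp [h]
  rcases hcs with hcs | hcs
  · refine ⟨i, Or.inl fun v => hinj ?_⟩
    rw [hτc, hcs, map_pow, hρroot, hσi]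
  · refine ⟨i, Or.inr fun v => hinj ?_⟩
    rw [hτc, hcs, map_neg, map_pow, hρroot, Matrix.neg_mulVec, hneg, hσi]
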